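/- For unit vectors u, v ∈ ℝ³, the Frobenius distance between F(u) and F(v) satisfies the exact identity ‖F(u) − F(v)‖² = 8·(1 − ⟨u,v⟩²) = 2·‖u − v‖²·‖u + v‖². -/

import Mathlib

noncomputable section
open Matrix
open scoped InnerProductSpace

/-- The outer product `q ⊗ v` of two vectors in `ℝ³`, with entries `(q ⊗ v) i j = q i * v j`. -/
def outer (q v : EuclideanSpace ℝ (Fin 3)) : Matrix (Fin 3) (Fin 3) ℝ :=
  fun i j => q i * v j

/-- The map `F(q) = 2 q⊗q − I₃`. -/
def Fmap (q : EuclideanSpace ℝ (Fin 3)) : Matrix (Fin 3) (Fin 3) ℝ :=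
  (2 : ℝ) • outer q q - 1

attribute [local instance] Matrix.frobeniusNormedAddCommGroup

lemma frobenius_norm_sq (A : Matrix (Fin 3) (Fin 3) ℝ) :
    ‖A‖ ^ 2 = ∑ i, ∑ j, (A i j) ^ 2 := by
  have hS : (0:ℝ) ≤ ∑ i, ∑ j, ‖A i j‖ ^ (2:ℝ) := by
    positivity
  rw [Matrix.frobenius_norm_def, ← Real.rpow_natCast _ 2, ← Real.rpow_mul hS]
  norm_num

/-- Exact identity for the Frobenius distance of two 180°-rotations:
`‖F(u) − F(v)‖² = 8(1 − ⟨u,v⟩²) = 2‖u−v‖²‖u+v‖²` for unit vectors `u, v`. -/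
theorem Fmap_dist_sq (u v : EuclideanSpace ℝ (Fin 3)) (hu : ‖u‖ = 1) (hv : ‖v‖ = 1) :
    ‖Fmap u - Fmap v‖ ^ 2 = 8 * (1 - ⟪u, v⟫_ℝ ^ 2) ∧
      ‖Fmap u - Fmap v‖ ^ 2 = 2 * ‖u - v‖ ^ 2 * ‖u + v‖ ^ 2 := by
  have hinner : ⟪u, v⟫_ℝ = ∑ i, u i * v i := by
    simp [PiLp.inner_apply, RCLike.inner_apply, mul_comm]
  have hu' : ∑ i, u i * u i = 1 := by
    have := real_inner_self_eq_norm_sq u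
    rw [hu, PiLp.inner_apply] at this
    simpa [RCLike.inner_apply, ← sq] using this
  have hv' : ∑ i, v i * v i = 1 := by
    have := real_inner_self_eq_norm_sq v
    rw [hv, PiLp.inner_apply] at this
    simpa [RCLike.inner_apply, ← sq] using this
  have h1 : ‖Fmap u - Fmap v‖ ^ 2 = 8 * (1 - ⟪u, v⟫_ℝ ^ 2) := by
    rw [frobenius_norm_sq, hinner]
    simp only [Fmap, outer, Matrix.sub_apply, Matrix.smul_apply, Matrix.one_apply,
      smul_eq_mul]
    rw [Fin.sum_univ_three] at hu' hv' ⊢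
    simp only [Fin.sum_univ_three]
    norm_num
    nlinarith [hu', hv', sq_nonneg (u 0), sq_nonneg (v 0)]
  refine ⟨h1, ?_⟩
  rw [h1, norm_sub_sq_real, norm_add_sq_real, hu, hv]
  ring
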